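/- arXiv:1508.01819 — 3 statements merged into one kernel-verified Lean document; each statement's English description precedes it below -/
import Mathlib

section
/- The total variation distance between Binomial(m′, λ/m) and Poisson(m′λ/m) is at most λ/m. -/
open ProbabilityTheory

/-- Total variation distance between two probability mass functions on ℕ. -/
noncomputable def tvDist (f g : ℕ → ℝ) : ℝ := (1 / 2) * ∑' k, |f k - g k|

/-- The Binomial(m', p) probability mass function on ℕ. -/
noncomputable def binomialPMFReal (m' : ℕ) (p : ℝ) (k : ℕ) : ℝ :=
  (m'.choose k : ℝ) * p ^ k * (1 - p) ^ (m' - k)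

open Finset Nat

namespace Stmt6Aux

noncomputable def U (L : ℝ) (j : ℕ) : ℝ := ∑ i ∈ Finset.range (j+1), L^i / i !

noncomputable def T (L : ℝ) (j : ℕ) : ℝ := ∑' t : ℕ, L^(t+(j+1)) / (t+(j+1))!

noncomputable def c (L : ℝ) (k : ℕ) : ℝ := Real.exp (-L) * L^k / k !

noncomputable def f (L : ℝ) (k : ℕ) : ℕ → ℝ
  | 0 => 0
  | (j+1) => if j < k then -((j ! : ℝ) / L^(j+1)) * c L k * U L j
             else ((j ! : ℝ) / L^(j+1)) * c L k * T L j

lemma expHasSum (L : ℝ) : HasSum (fun n : ℕ => L ^ n / n !) (Real.exp L) := by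
  rw [Real.exp_eq_exp_ℝ]
  exact NormedSpace.expSeries_div_hasSum_exp L

lemma summable_expS (L : ℝ) : Summable (fun n : ℕ => L ^ n / n !) := (expHasSum L).summable

lemma U_add_T (L : ℝ) (j : ℕ) : U L j + T L j = Real.exp L := by
  have h := Summable.sum_add_tsum_nat_add (f := fun n : ℕ => L ^ n / n !) (j+1) (summable_expS L)
  rw [(expHasSum L).tsum_eq] at h
  exact h

lemma U_succ (L : ℝ) (j : ℕ) : U L (j+1) = U L j + L^(j+1)/(j+1)! :=
  Finset.sum_range_succ _ _

lemma T_succ (L : ℝ) (j : ℕ) : T L (j+1) = T L j - L^(j+1)/(j+1)! := by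
  have h1 := U_add_T L j
  have h2 := U_add_T L (j+1)
  rw [U_succ] at h2
  linarith

lemma U_zero (L : ℝ) : U L 0 = 1 := by simp [U]

lemma T_zero (L : ℝ) : T L 0 = Real.exp L - 1 := by
  have := U_add_T L 0
  rw [U_zero] at this
  linarith

lemma U_nonneg {L : ℝ} (hL : 0 ≤ L) (j : ℕ) : 0 ≤ U L j := by
  apply Finset.sum_nonneg
  intro i _
  positivity

lemma T_nonneg {L : ℝ} (hL : 0 ≤ L) (j : ℕ) : 0 ≤ T L j := by
  apply tsum_nonneg
  intro t
  positivity

lemma c_pos {L : ℝ} (hL : 0 < L) (k : ℕ) : 0 < c L k := by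
  unfold c
  positivity

lemma f_zero (L : ℝ) (k : ℕ) : f L k 0 = 0 := rfl

lemma f_succ (L : ℝ) (k j : ℕ) :
    f L k (j+1) = if j < k then -((j ! : ℝ) / L^(j+1)) * c L k * U L j
             else ((j ! : ℝ) / L^(j+1)) * c L k * T L j := rfl

lemma stein {L : ℝ} (hL : 0 < L) (k j : ℕ) :
    L * f L k (j+1) - j * f L k j = (if j = k then 1 else 0) - c L k := by
  have hL' : L ≠ 0 := hL.ne'
  have hE : Real.exp L ≠ 0 := Real.exp_ne_zero L
  cases j with
  | zero =>
    rw [f_zero, f_succ]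
    rcases Nat.eq_zero_or_pos k with hk | hk
    · subst hk
      simp only [Nat.lt_irrefl, if_false, if_pos rfl, if_true]
      rw [T_zero]
      unfold c
      rw [Real.exp_neg]
      field_simp
      ring
    · rw [if_pos hk, if_neg (by omega)]
      rw [U_zero]
      field_simp
      ring
  | succ j =>
    have h2 : (j ! : ℝ) ≠ 0 := by exact_mod_cast j.factorial_ne_zero
    have h2' : ((j+1)! : ℝ) ≠ 0 := by exact_mod_cast (j+1).factorial_ne_zero
    rw [f_succ, f_succ]
    rcases lt_trichotomy (j+1) k with hk | hk | hk
    · rw [if_pos hk, if_pos (by omega), if_neg (by omega), U_succ]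
      field_simp
      push_cast [Nat.factorial_succ]
      ring
    · subst hk
      rw [if_neg (by omega), if_pos (by omega), if_pos rfl]
      have hT : T L (j+1) = Real.exp L - U L j - L^(j+1)/(j+1)! := by
        have h1 := U_add_T L (j+1)
        rw [U_succ] at h1
        linarith
      rw [hT]
      unfold c
      rw [Real.exp_neg]
      field_simp
      push_cast [Nat.factorial_succ]
      ring
    · rw [if_neg (by omega), if_neg (by omega), if_neg (by omega), T_succ]
      field_simp
      push_cast [Nat.factorial_succ]
      ring

lemma g_repr {L : ℝ} (hL : 0 < L) (j : ℕ) :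
    (j ! : ℝ)/L^(j+1) * U L j = ∑ s ∈ range (j+1), (j.descFactorial s : ℝ) / L^(s+1) := by
  rw [U, Finset.mul_sum, ← Finset.sum_range_reflect]
  apply Finset.sum_congr rfl
  intro s hs
  have hs' : s ≤ j := by
    simp only [Finset.mem_range] at hs; omega
  have hidx : j + 1 - 1 - s = j - s := by omega
  rw [hidx]
  have h1 : ((j - s)! : ℝ) * (j.descFactorial s : ℝ) = (j ! : ℝ) := by
    exact_mod_cast congrArg (Nat.cast (R := ℝ)) (Nat.factorial_mul_descFactorial hs')
  have h2 : L^(j - s) * L^(s+1) = L^(j+1) := by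
    rw [← pow_add]; congr 1; omega
  have hf1 : ((j-s)! : ℝ) ≠ 0 := by exact_mod_cast (j-s).factorial_ne_zero
  have hL' : L ≠ 0 := hL.ne'
  field_simp
  rw [← h1, ← h2]
  ring

lemma g_mono {L : ℝ} (hL : 0 < L) (j : ℕ) :
    (j ! : ℝ)/L^(j+1) * U L j ≤ ((j+1)! : ℝ)/L^(j+1+1) * U L (j+1) := by
  rw [g_repr hL j, g_repr hL (j+1)]
  calc ∑ s ∈ range (j+1), (j.descFactorial s : ℝ) / L^(s+1)
      ≤ ∑ s ∈ range (j+1), ((j+1).descFactorial s : ℝ) / L^(s+1) := by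
        apply Finset.sum_le_sum
        intro s _
        have h := Nat.descFactorial_le s (Nat.le_succ j)
        have h' : (j.descFactorial s : ℝ) ≤ ((j+1).descFactorial s : ℝ) := by exact_mod_cast h
        exact div_le_div_of_nonneg_right h' (by positivity) |>.trans_eq rfl
    _ ≤ ∑ s ∈ range (j+1+1), ((j+1).descFactorial s : ℝ) / L^(s+1) := by
        apply Finset.sum_le_sum_of_subset_of_nonneg (Finset.range_subset_range.mpr (by omega))
        intro i _ _
        positivity


lemma summable_Hterm {L : ℝ} (hL : 0 < L) (j : ℕ) :
    Summable (fun t : ℕ => (j ! : ℝ) * L^t / (t+(j+1))!) := by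
  have h1 : Summable (fun t : ℕ => L^(t+(j+1))/(t+(j+1))!) :=
    (summable_nat_add_iff (f := fun n : ℕ => L^n / n !) (j+1)).mpr (summable_expS L)
  have h2 := h1.mul_left ((j ! : ℝ) / L^(j+1))
  apply h2.congr
  intro t
  have hL' : L ≠ 0 := hL.ne'
  have hf : (((t+(j+1))!) : ℝ) ≠ 0 := by exact_mod_cast (t+(j+1)).factorial_ne_zero
  rw [pow_add]
  field_simp
  ring

noncomputable def Hf (L : ℝ) (j : ℕ) : ℝ := ∑' t : ℕ, (j ! : ℝ) * L^t / (t+(j+1))!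

lemma Hf_eq {L : ℝ} (hL : 0 < L) (j : ℕ) :
    (j ! : ℝ)/L^(j+1) * T L j = Hf L j := by
  rw [T, ← tsum_mul_left, Hf]
  congr 1 with t
  have hL' : L ≠ 0 := hL.ne'
  have hf : (((t+(j+1))!) : ℝ) ≠ 0 := by exact_mod_cast (t+(j+1)).factorial_ne_zero
  rw [pow_add]
  field_simp
  ring

lemma Hf_anti {L : ℝ} (hL : 0 < L) (j : ℕ) : Hf L (j+1) ≤ Hf L j := by
  apply Summable.tsum_le_tsum _ (summable_Hterm hL (j+1)) (summable_Hterm hL j)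
  intro t
  have hp1 : (0:ℝ) < ((t+(j+1))! : ℝ) := by exact_mod_cast (t+(j+1)).factorial_pos
  have hp2 : (0:ℝ) < ((t+(j+1+1))! : ℝ) := by exact_mod_cast (t+(j+1+1)).factorial_pos
  rw [div_le_div_iff₀ hp2 hp1]
  have key : ((j+1)! : ℝ) * ((t+(j+1))! : ℝ) ≤ (j ! : ℝ) * ((t+(j+1+1))! : ℝ) := by
    have hnat : (j+1)! * (t+(j+1))! ≤ j ! * (t+(j+1+1))! := by
      have h1 : (t+(j+1+1))! = (t+j+2) * (t+(j+1))! := by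
        rw [show t+(j+1+1) = (t+(j+1))+1 by omega, Nat.factorial_succ,
          show t+(j+1)+1 = t+j+2 by omega]
      rw [Nat.factorial_succ, h1]
      calc (j+1) * j ! * (t+(j+1))! = j ! * ((j+1) * (t+(j+1))!) := by ring
        _ ≤ j ! * ((t+j+2) * (t+(j+1))!) :=
            Nat.mul_le_mul_left _ (Nat.mul_le_mul_right _ (by omega))
    exact_mod_cast hnat
  have hLt : (0:ℝ) ≤ L^t := by positivity
  calc ((j+1)! : ℝ) * L^t * ((t+(j+1))! : ℝ)
      = (((j+1)! : ℝ) * ((t+(j+1))! : ℝ)) * L^t := by ring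
    _ ≤ ((j ! : ℝ) * ((t+(j+1+1))! : ℝ)) * L^t := mul_le_mul_of_nonneg_right key hLt
    _ = (j ! : ℝ) * L^t * ((t+(j+1+1))! : ℝ) := by ring

lemma D_lt {L : ℝ} (hL : 0 < L) {k j : ℕ} (hk : j+1 < k) :
    f L k (j+1+1) - f L k (j+1) ≤ 0 := by
  rw [f_succ, f_succ, if_pos hk, if_pos (by omega)]
  have hg := g_mono hL j
  have hc := (c_pos hL k).le
  have hU1 := U_nonneg hL.le j
  have hU2 := U_nonneg hL.le (j+1)
  nlinarith [mul_le_mul_of_nonneg_right hg hc]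

lemma D_gt {L : ℝ} (hL : 0 < L) {k j : ℕ} (hk : k ≤ j) :
    f L k (j+1+1) - f L k (j+1) ≤ 0 := by
  rw [f_succ, f_succ, if_neg (by omega), if_neg (by omega)]
  have hH : Hf L (j+1) ≤ Hf L j := Hf_anti hL j
  have hc := (c_pos hL k).le
  rw [← Hf_eq hL j, ← Hf_eq hL (j+1)] at hH
  nlinarith [mul_le_mul_of_nonneg_right hH hc]

lemma summable_S {L : ℝ} (hL : 0 < L) : Summable (fun i : ℕ => L^i / (i+1)!) := by
  apply Summable.of_nonneg_of_le (fun i => by positivity) _ (summable_expS L)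
  intro i
  apply div_le_div_of_nonneg_left (by positivity) (by positivity)
  exact_mod_cast Nat.factorial_le (Nat.le_succ i)

lemma S_val {L : ℝ} (hL : 0 < L) :
    (∑' i : ℕ, L^i / (i+1)!) = (Real.exp L - 1) / L := by
  have hL' : L ≠ 0 := hL.ne'
  have h1 := Summable.sum_add_tsum_nat_add (f := fun n : ℕ => L ^ n / n !) 1 (summable_expS L)
  rw [(expHasSum L).tsum_eq] at h1
  simp only [Finset.range_one, Finset.sum_singleton, pow_zero, Nat.factorial_zero,
    Nat.cast_one, div_one] at h1
  have h2 : L * (∑' i : ℕ, L^i / (i+1)!) = ∑' i : ℕ, L^(i+1) / (i+1)! := by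
    rw [← tsum_mul_left]
    congr 1 with i
    rw [pow_succ]
    ring
  have h3 : (∑' i : ℕ, L^(i+1) / (i+1)!) = Real.exp L - 1 := by
    have : (fun i : ℕ => L^(i+1) / (i+1)!) = (fun i : ℕ => L^(i+1) / ((i+1)! : ℝ)) := rfl
    linarith
  field_simp
  linarith [h2, h3]

lemma D_eq {L : ℝ} (hL : 0 < L) (j : ℕ) :
    f L (j+1) (j+1+1) - f L (j+1) (j+1) ≤ 1 / L := by
  have hL' : L ≠ 0 := hL.ne'
  have hE : Real.exp L ≠ 0 := Real.exp_ne_zero L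
  have hfj : (j ! : ℝ) ≠ 0 := by exact_mod_cast j.factorial_ne_zero
  have hfj1 : ((j+1)! : ℝ) ≠ 0 := by exact_mod_cast (j+1).factorial_ne_zero
  rw [f_succ, f_succ, if_neg (by omega), if_pos (by omega)]
  have e1 : ((j+1)! : ℝ)/L^(j+1+1) * c L (j+1) = Real.exp (-L) / L := by
    unfold c
    field_simp
    ring
  have e2 : (j ! : ℝ)/L^(j+1) * c L (j+1) = Real.exp (-L) / ((j:ℝ)+1) := by
    unfold c
    push_cast [Nat.factorial_succ]
    have hj1 : ((j:ℝ)+1) ≠ 0 := by positivity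
    field_simp
  have hrw : ((j+1)! : ℝ)/L^(j+1+1) * c L (j+1) * T L (j+1) -
      -((j ! : ℝ)/L^(j+1)) * c L (j+1) * U L j =
      Real.exp (-L)/L * T L (j+1) + Real.exp (-L)/((j:ℝ)+1) * U L j := by
    linear_combination (T L (j+1)) * e1 + (U L j) * e2
  rw [hrw]
  have hsplit := Summable.sum_add_tsum_nat_add (f := fun i : ℕ => L^i/(i+1)!) (j+1) (summable_S hL)
  have hT1 : T L (j+1) / L = ∑' t : ℕ, L^(t+(j+1)) / ((t+(j+1))+1)! := by
    rw [T, ← tsum_div_const]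
    congr 1 with t
    rw [show t+(j+1+1) = t+(j+1)+1 by omega, pow_succ]
    field_simp
  have hU1 : U L j / ((j:ℝ)+1) ≤ ∑ i ∈ Finset.range (j+1), L^i/(i+1)! := by
    rw [U, Finset.sum_div]
    apply Finset.sum_le_sum
    intro i hi
    have hi' : i < j + 1 := Finset.mem_range.mp hi
    rw [div_div]
    apply div_le_div_of_nonneg_left (by positivity) (by positivity)
    have : ((i+1)! : ℝ) = ((i:ℝ)+1) * (i ! : ℝ) := by push_cast [Nat.factorial_succ]; ring
    rw [this]
    have h1 : ((i:ℝ)+1) ≤ ((j:ℝ)+1) := by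
      have : (i:ℝ) ≤ (j:ℝ) := by exact_mod_cast Nat.lt_succ_iff.mp hi'
      linarith
    have h2 : (0:ℝ) < (i ! : ℝ) := by exact_mod_cast i.factorial_pos
    nlinarith
  have hexpneg : (0:ℝ) < Real.exp (-L) := Real.exp_pos _
  have h1 : Real.exp (-L) * (Real.exp L - 1) = 1 - Real.exp (-L) := by
    rw [mul_sub, ← Real.exp_add]
    simp
  calc Real.exp (-L)/L * T L (j+1) + Real.exp (-L)/((j:ℝ)+1) * U L j
      = Real.exp (-L) * (T L (j+1)/L) + Real.exp (-L) * (U L j/((j:ℝ)+1)) := by ring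
    _ ≤ Real.exp (-L) * (∑' t : ℕ, L^(t+(j+1)) / ((t+(j+1))+1)!) +
        Real.exp (-L) * (∑ i ∈ Finset.range (j+1), L^i/(i+1)!) := by
        apply _root_.add_le_add
        · rw [hT1]
        · exact mul_le_mul_of_nonneg_left hU1 hexpneg.le
    _ = Real.exp (-L) * ((∑ i ∈ Finset.range (j+1), L^i/(i+1)!) +
        (∑' t : ℕ, L^(t+(j+1)) / ((t+(j+1))+1)!)) := by ring
    _ = Real.exp (-L) * ((Real.exp L - 1)/L) := by rw [hsplit, S_val hL]
    _ = (1 - Real.exp (-L))/L := by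
        rw [mul_div_assoc'] at *
        rw [h1]
    _ ≤ 1/L := by
        gcongr
        linarith

noncomputable def FA (L : ℝ) (A : Finset ℕ) (j : ℕ) : ℝ := ∑ k ∈ A, f L k j

lemma FA_stein {L : ℝ} (hL : 0 < L) (A : Finset ℕ) (j : ℕ) :
    L * FA L A (j+1) - j * FA L A j =
      (if j ∈ A then 1 else 0) - ∑ k ∈ A, c L k := by
  unfold FA
  rw [Finset.mul_sum, Finset.mul_sum, ← Finset.sum_sub_distrib]
  have : ∀ k ∈ A, L * f L k (j+1) - j * f L k j = (if j = k then 1 else 0) - c L k :=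
    fun k _ => stein hL k j
  rw [Finset.sum_congr rfl this, Finset.sum_sub_distrib, Finset.sum_ite_eq A j (fun _ => (1:ℝ))]

lemma FA_diff_le {L : ℝ} (hL : 0 < L) (A : Finset ℕ) (j : ℕ) :
    FA L A (j+1+1) - FA L A (j+1) ≤ 1 / L := by
  unfold FA
  rw [← Finset.sum_sub_distrib]
  have hone : (0:ℝ) ≤ 1 / L := by positivity
  by_cases hmem : j + 1 ∈ A
  · rw [← Finset.sum_erase_add _ _ hmem]
    have h1 : ∑ k ∈ A.erase (j+1), (f L k (j+1+1) - f L k (j+1)) ≤ 0 := by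
      apply Finset.sum_nonpos
      intro k hk
      have hkne : k ≠ j + 1 := Finset.ne_of_mem_erase hk
      rcases lt_or_gt_of_ne hkne with h | h
      · exact D_gt hL (by omega)
      · exact D_lt hL (by omega)
    have h2 := D_eq hL j
    linarith
  · apply le_trans _ hone
    apply Finset.sum_nonpos
    intro k hk
    have hkne : k ≠ j + 1 := fun h => hmem (h ▸ hk)
    rcases lt_or_gt_of_ne hkne with h | h
    · exact D_gt hL (by omega)
    · exact D_lt hL (by omega)

local notation "B" => binomialPMFReal

lemma binom_nonneg {p : ℝ} (hp : 0 ≤ p) (hp1 : p ≤ 1) (n k : ℕ) : 0 ≤ B n p k := by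
  unfold binomialPMFReal
  have h1 : (0:ℝ) ≤ 1 - p := by linarith
  positivity

lemma binom_zero {p : ℝ} {n k : ℕ} (h : n < k) : B n p k = 0 := by
  unfold binomialPMFReal
  rw [Nat.choose_eq_zero_of_lt h]
  simp

lemma binom_sum (p : ℝ) (n : ℕ) : ∑ k ∈ range (n+1), B n p k = 1 := by
  have h := add_pow p (1-p) n
  have h2 : p + (1-p) = 1 := by ring
  rw [h2, one_pow] at h
  have h3 : ∑ k ∈ range (n+1), B n p k
      = ∑ m ∈ range (n+1), p^m * (1-p)^(n-m) * (n.choose m : ℝ) := by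
    apply Finset.sum_congr rfl
    intro k _
    unfold binomialPMFReal
    ring
  rw [h3, ← h]

lemma binom_conv (p : ℝ) (n' : ℕ) (G : ℕ → ℝ) :
    ∑ k ∈ range (n'+2), B (n'+1) p k * G k
    = ∑ j ∈ range (n'+1), B n' p j * ((1-p) * G j + p * G (j+1)) := by
  rw [Finset.sum_range_succ' (fun k => B (n'+1) p k * G k) (n'+1)]
  have hb0 : B (n'+1) p 0 * G 0 = (1-p)^(n'+1) * G 0 := by
    unfold binomialPMFReal; simp
  rw [hb0]
  have hsplit : ∀ k, k < n' + 1 →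
      B (n'+1) p (k+1) * G (k+1) =
      B n' p k * (p * G (k+1)) + ((n'.choose (k+1) : ℝ) * p^(k+1) * (1-p)^(n'-k)) * G (k+1) := by
    intro k hk
    unfold binomialPMFReal
    rw [Nat.choose_succ_succ]
    push_cast [Nat.succ_eq_add_one]
    ring
  rw [Finset.sum_congr rfl (fun k hk => hsplit k (Finset.mem_range.mp hk))]
  rw [Finset.sum_add_distrib]
  have hRHS : ∑ j ∈ range (n'+1), B n' p j * ((1-p) * G j + p * G (j+1)) =
      (∑ j ∈ range (n'+1), B n' p j * ((1-p) * G j)) +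
      ∑ j ∈ range (n'+1), B n' p j * (p * G (j+1)) := by
    rw [← Finset.sum_add_distrib]
    apply Finset.sum_congr rfl
    intro j _
    ring
  rw [hRHS]
  have hfirst : ∑ j ∈ range (n'+1), B n' p j * ((1-p) * G j) =
      (∑ j ∈ range n', ((n'.choose (j+1) : ℝ) * p^(j+1) * (1-p)^(n'-j)) * G (j+1)) +
      (1-p)^(n'+1) * G 0 := by
    rw [Finset.sum_range_succ' (fun j => B n' p j * ((1-p) * G j)) n']
    congr 1
    · apply Finset.sum_congr rfl
      intro j hj
      have hj' : j < n' := Finset.mem_range.mp hj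
      unfold binomialPMFReal
      rw [show n'-(j+1) = n'-j-1 from by omega]
      have : (1-p)^(n'-j-1) * (1-p) = (1-p)^(n'-j) := by
        rw [← pow_succ]
        congr 1
        omega
      push_cast
      linear_combination ((n'.choose (j+1) : ℝ) * p^(j+1) * G (j+1)) * this
    · unfold binomialPMFReal
      simp
      ring
  have hsecond : ∑ k ∈ range (n'+1), ((n'.choose (k+1) : ℝ) * p^(k+1) * (1-p)^(n'-k)) * G (k+1) =
      ∑ k ∈ range n', ((n'.choose (k+1) : ℝ) * p^(k+1) * (1-p)^(n'-k)) * G (k+1) := by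
    rw [Finset.sum_range_succ]
    rw [Nat.choose_eq_zero_of_lt (by omega)]
    simp
  rw [hsecond, hfirst]
  ring

lemma binom_kb (p : ℝ) (n' k : ℕ) :
    ((k:ℝ)+1) * B (n'+1) p (k+1) = ((n':ℝ)+1) * p * B n' p k := by
  unfold binomialPMFReal
  have h := Nat.add_one_mul_choose_eq n' k
  have h' : ((n'+1) * n'.choose k : ℝ) = ((n'+1).choose (k+1) * (k+1) : ℝ) := by
    exact_mod_cast congrArg (Nat.cast (R := ℝ)) h
  push_cast at h' ⊢
  linear_combination (-(p^(k+1) * (1-p)^(n'-k))) * h'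

lemma binom_weight (p : ℝ) (n' : ℕ) (F : ℕ → ℝ) :
    ∑ k ∈ range (n'+2), (k:ℝ) * B (n'+1) p k * F k
    = ((n':ℝ)+1) * p * ∑ j ∈ range (n'+1), B n' p j * F (j+1) := by
  rw [Finset.sum_range_succ' (fun k => (k:ℝ) * B (n'+1) p k * F k) (n'+1)]
  simp only [Nat.cast_zero, zero_mul, add_zero]
  rw [Finset.mul_sum]
  apply Finset.sum_congr rfl
  intro k _
  have h := binom_kb p n' k
  push_cast
  linear_combination (F (k+1)) * h

lemma c_hasSum {L : ℝ} : HasSum (c L) 1 := by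
  have h := (expHasSum L).mul_left (Real.exp (-L))
  have hval : Real.exp (-L) * Real.exp L = 1 := by rw [← Real.exp_add]; simp
  rw [hval] at h
  apply h.congr_fun
  intro k
  rw [c, mul_div_assoc]

theorem main_ineq (n' : ℕ) (p : ℝ) (hp : 0 < p) (hp1 : p ≤ 1) :
    tvDist (binomialPMFReal (n'+1) p) (c (((n':ℝ)+1) * p)) ≤ p := by
  classical
  set L : ℝ := ((n':ℝ)+1) * p with hLdef
  have hL : 0 < L := by positivity
  have hL' : L ≠ 0 := hL.ne'
  set bb : ℕ → ℝ := B (n'+1) p with hbbdef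
  set A : Finset ℕ := (range (n'+2)).filter (fun k => c L k ≤ bb k) with hAdef
  set F : ℕ → ℝ := FA L A with hFdef
  have hbnonneg : ∀ k, 0 ≤ bb k := binom_nonneg hp.le hp1 (n'+1)
  have hb'nonneg : ∀ k, 0 ≤ B n' p k := binom_nonneg hp.le hp1 n'
  -- Step A : Stein estimate
  have stein_est : (∑ k ∈ A, bb k) - (∑ k ∈ A, c L k) ≤ p := by
    have compute1 : ∑ k ∈ range (n'+2), bb k * (L * F (k+1) - (k:ℝ) * F k)
        = (∑ k ∈ A, bb k) - (∑ k ∈ A, c L k) := by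
      have h1 : ∀ k ∈ range (n'+2), bb k * (L * F (k+1) - (k:ℝ) * F k)
          = bb k * ((if k ∈ A then 1 else 0) - ∑ i ∈ A, c L i) := by
        intro k _
        rw [hFdef, FA_stein hL]
      rw [Finset.sum_congr rfl h1]
      have h2 : ∀ k, bb k * ((if k ∈ A then 1 else 0) - ∑ i ∈ A, c L i)
          = (if k ∈ A then bb k else 0) - bb k * ∑ i ∈ A, c L i := by
        intro k
        split_ifs <;> ring
      simp only [h2]
      rw [Finset.sum_sub_distrib]
      congr 1
      · rw [Finset.sum_ite_mem]
        congr 1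
        rw [Finset.inter_eq_right.mpr (Finset.filter_subset _ _)]
      · rw [← Finset.sum_mul, binom_sum p (n'+1), one_mul]
    have compute2 : ∑ k ∈ range (n'+2), bb k * (L * F (k+1) - (k:ℝ) * F k)
        = L * p * ∑ j ∈ range (n'+1), B n' p j * (F (j+1+1) - F (j+1)) := by
      have e1 : ∑ k ∈ range (n'+2), bb k * (L * F (k+1) - (k:ℝ) * F k)
          = L * (∑ k ∈ range (n'+2), bb k * F (k+1))
            - ∑ k ∈ range (n'+2), (k:ℝ) * bb k * F k := by
        rw [Finset.mul_sum, ← Finset.sum_sub_distrib]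
        apply Finset.sum_congr rfl
        intro k _
        ring
      have e2 := binom_conv p n' (fun k => F (k+1))
      have e3 := binom_weight p n' F
      rw [e1, e2, e3, ← hLdef, Finset.mul_sum, Finset.mul_sum, ← Finset.sum_sub_distrib]
      conv_rhs => rw [Finset.mul_sum]
      apply Finset.sum_congr rfl
      intro j _
      ring
    rw [← compute1, compute2]
    have hbound : ∑ j ∈ range (n'+1), B n' p j * (F (j+1+1) - F (j+1))
        ≤ ∑ j ∈ range (n'+1), B n' p j * (1/L) := by
      apply Finset.sum_le_sum
      intro j _
      exact mul_le_mul_of_nonneg_left (FA_diff_le hL A j) (hb'nonneg j)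
    have hsum1 : ∑ j ∈ range (n'+1), B n' p j * (1/L) = 1/L := by
      rw [← Finset.sum_mul, binom_sum p n', one_mul]
    calc L * p * ∑ j ∈ range (n'+1), B n' p j * (F (j+1+1) - F (j+1))
        ≤ L * p * (1/L) := by
          apply mul_le_mul_of_nonneg_left _ (by positivity)
          rw [← hsum1]; exact hbound
      _ = p := by field_simp
  -- Step B : tvDist equals the A-sum
  have tv_eq : tvDist bb (c L) = (∑ k ∈ A, bb k) - (∑ k ∈ A, c L k) := by
    set d : ℕ → ℝ := fun k => bb k - c L k with hddef
    have hbsupp : ∀ k ∉ range (n'+2), bb k = 0 := by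
      intro k hk
      apply binom_zero
      simp only [Finset.mem_range] at hk
      omega
    have hbhs : HasSum bb 1 := by
      have := (hasSum_sum_of_ne_finset_zero hbsupp : HasSum bb _)
      rwa [binom_sum p (n'+1)] at this
    have hchs : HasSum (c L) 1 := c_hasSum
    have hdhs : HasSum d 0 := by
      have := hbhs.sub hchs
      simpa using this
    have hdsummable : Summable d := hdhs.summable
    have habs : Summable (fun k => |d k|) := hdsummable.abs
    have hposd : Summable (fun k => max (d k) 0) := by
      apply ((habs.add hdsummable).div_const 2).congr
      intro k
      rcases le_total 0 (d k) with h | h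
      · rw [max_eq_left h, abs_of_nonneg h]; ring
      · rw [max_eq_right h, abs_of_nonpos h]; ring
    have habs_eq : ∀ k, |d k| = 2 * max (d k) 0 - d k := by
      intro k
      rcases le_total 0 (d k) with h | h
      · rw [max_eq_left h, abs_of_nonneg h]; ring
      · rw [max_eq_right h, abs_of_nonpos h]; ring
    have htv : tvDist bb (c L) = ∑' k, max (d k) 0 := by
      unfold tvDist
      have : ∀ k, |bb k - c L k| = 2 * max (d k) 0 - d k := habs_eq
      rw [tsum_congr this, Summable.tsum_sub ((hposd.mul_left 2).congr (fun k => rfl)) hdsummable,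
        hdhs.tsum_eq, tsum_mul_left]
      ring
    have hvanish : ∀ k ∉ range (n'+2), max (d k) 0 = 0 := by
      intro k hk
      have h1 : bb k = 0 := hbsupp k hk
      have h2 : 0 < c L k := c_pos hL k
      apply max_eq_right
      rw [hddef]
      simp only
      linarith
    rw [htv, tsum_eq_sum hvanish]
    have : ∀ k ∈ range (n'+2), max (d k) 0 = if c L k ≤ bb k then d k else 0 := by
      intro k _
      split_ifs with h
      · apply max_eq_left; rw [hddef]; simp only; linarith
      · apply max_eq_right; rw [hddef]; simp only; push_neg at h; linarith
    rw [Finset.sum_congr rfl this, ← Finset.sum_filter, ← hAdef, ← Finset.sum_sub_distrib]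
  rw [tv_eq]
  exact stein_est

end Stmt6Aux

/-- the total variation distance between `Binomial(m', λ/m)` and
`Poisson(m'λ/m)` is at most `λ/m`. -/
theorem stmt_6 (m' m : ℕ) (hm' : 1 ≤ m') (hm : m' ≤ m) (lam : ℝ) (hlam : 0 < lam)
    (hlam' : lam / m ≤ 1) :
    tvDist (binomialPMFReal m' (lam / m))
      (poissonPMFReal ⟨(m' : ℝ) * lam / m, by positivity⟩) ≤ lam / m := by
  have hm1 : 1 ≤ m := le_trans hm' hm
  have hmR : (0:ℝ) < m := by exact_mod_cast hm1
  have hp : 0 < lam / m := by positivity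
  obtain ⟨n', rfl⟩ : ∃ n', m' = n' + 1 := ⟨m' - 1, by omega⟩
  have hab : ((((n'+1 : ℕ)) : ℝ) * lam / ↑m : ℝ) = ((n':ℝ)+1) * (lam/↑m) := by
    push_cast; ring
  have hcoe : ∀ (h : (0:ℝ) ≤ (((n'+1 : ℕ)) : ℝ) * lam / ↑m),
      poissonPMFReal ⟨(((n'+1 : ℕ)) : ℝ) * lam / ↑m, h⟩
        = Stmt6Aux.c (((n':ℝ)+1) * (lam/↑m)) := by
    intro h
    funext k
    simp only [poissonPMFReal, NNReal.coe_mk, Stmt6Aux.c, hab]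
    rfl
  rw [hcoe]
  exact Stmt6Aux.main_ineq n' (lam/m) hp hlam'
end

section
/- The total variation distance between two Poisson distributions Poisson(λ) and Poisson(λ′) is at most |λ − λ′|. -/
open ProbabilityTheory Real

private lemma expHasSum (x : ℝ) : HasSum (fun k : ℕ => x ^ k / k.factorial) (Real.exp x) := by
  rw [Real.exp_eq_exp_ℝ]
  exact NormedSpace.expSeries_div_hasSum_exp x

private lemma key (a b : ℝ) (ha : 0 ≤ a) (hab : a ≤ b) :
    ∑' k : ℕ, |Real.exp (-a) * a ^ k / k.factorial - Real.exp (-b) * b ^ k / k.factorial|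
      ≤ 2 * (b - a) := by
  set g : ℕ → ℝ := fun k =>
    (Real.exp (-b) - Real.exp (-a)) * -(a ^ k / k.factorial)
      + Real.exp (-b) * (b ^ k / k.factorial - a ^ k / k.factorial) with hg
  have hbound : ∀ k : ℕ, |Real.exp (-a) * a ^ k / k.factorial
      - Real.exp (-b) * b ^ k / k.factorial| ≤ g k := by
    intro k
    have h1 : (0:ℝ) ≤ a ^ k / k.factorial := by positivity
    have h2 : a ^ k / k.factorial ≤ b ^ k / k.factorial := by
      gcongr
    have hexp : Real.exp (-b) ≤ Real.exp (-a) := Real.exp_le_exp.mpr (by linarith)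
    have hrw : Real.exp (-a) * a ^ k / k.factorial - Real.exp (-b) * b ^ k / k.factorial
        = (Real.exp (-a) - Real.exp (-b)) * (a ^ k / k.factorial)
          + Real.exp (-b) * (a ^ k / k.factorial - b ^ k / k.factorial) := by ring
    rw [hrw, hg]
    calc _ ≤ |(Real.exp (-a) - Real.exp (-b)) * (a ^ k / k.factorial)|
            + |Real.exp (-b) * (a ^ k / k.factorial - b ^ k / k.factorial)| := abs_add_le _ _
      _ = (Real.exp (-a) - Real.exp (-b)) * (a ^ k / k.factorial)
            + Real.exp (-b) * (b ^ k / k.factorial - a ^ k / k.factorial) := by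
          rw [abs_mul, abs_mul, abs_of_nonneg (by linarith : (0:ℝ) ≤ Real.exp (-a) - Real.exp (-b)),
            abs_of_nonneg h1, abs_of_pos (Real.exp_pos (-b)),
            abs_of_nonpos (by linarith : a ^ k / (k.factorial:ℝ) - b ^ k / k.factorial ≤ 0)]
          ring
      _ = _ := by ring
  have hgsum : HasSum g ((Real.exp (-b) - Real.exp (-a)) * -(Real.exp a)
      + Real.exp (-b) * (Real.exp b - Real.exp a)) :=
    (((expHasSum a).neg).mul_left _).add (((expHasSum b).sub (expHasSum a)).mul_left _)
  have hsummable : Summable (fun k : ℕ =>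
      |Real.exp (-a) * a ^ k / k.factorial - Real.exp (-b) * b ^ k / k.factorial|) :=
    Summable.of_nonneg_of_le (fun k => abs_nonneg _) hbound hgsum.summable
  calc ∑' k : ℕ, |Real.exp (-a) * a ^ k / k.factorial - Real.exp (-b) * b ^ k / k.factorial|
      ≤ ∑' k, g k := Summable.tsum_le_tsum hbound hsummable hgsum.summable
    _ = (Real.exp (-b) - Real.exp (-a)) * -(Real.exp a)
        + Real.exp (-b) * (Real.exp b - Real.exp a) := hgsum.tsum_eq
    _ = 2 * (1 - Real.exp (a - b)) := by
        rw [Real.exp_neg a, Real.exp_neg b, Real.exp_sub]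
        have hea := Real.exp_pos a
        have heb := Real.exp_pos b
        field_simp
        ring
    _ ≤ 2 * (b - a) := by
        have := Real.add_one_le_exp (a - b)
        nlinarith

/-- the total variation distance between `Poisson(λ)` and `Poisson(λ')`
is at most `|λ - λ'|`. -/
theorem stmt_7 (lam lam' : NNReal) :
    tvDist (poissonPMFReal lam) (poissonPMFReal lam') ≤ |(lam : ℝ) - (lam' : ℝ)| := by
  have main : ∀ a b : NNReal, (a:ℝ) ≤ (b:ℝ) →
      tvDist (poissonPMFReal a) (poissonPMFReal b) ≤ |(a : ℝ) - (b : ℝ)| := by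
    intro a b hab
    rw [abs_of_nonpos (by linarith), tvDist]
    have h := key a b a.coe_nonneg hab
    have : ∑' k, |poissonPMFReal a k - poissonPMFReal b k|
        = ∑' k : ℕ, |Real.exp (-(a:ℝ)) * (a:ℝ) ^ k / k.factorial
            - Real.exp (-(b:ℝ)) * (b:ℝ) ^ k / k.factorial| := by
      unfold poissonPMFReal; norm_num
    rw [this]
    linarith
  rcases le_total (lam:ℝ) (lam':ℝ) with h | h
  · exact main lam lam' h
  · have := main lam' lam h
    rw [tvDist] at this ⊢
    rw [abs_sub_comm]
    calc (1/2 : ℝ) * ∑' k, |poissonPMFReal lam k - poissonPMFReal lam' k|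
        = (1/2 : ℝ) * ∑' k, |poissonPMFReal lam' k - poissonPMFReal lam k| := by
          congr 1; exact tsum_congr fun k => abs_sub_comm _ _
      _ ≤ _ := this
end

section
/- Row separation of the block eigenspace: let D̄ be the n×n block matrix with K equal blocks of size n/K, within-block value σ₁ and between-block value σ₂ (σ₁ > σ₂), zero diagonal, and let W be the n×K matrix of orthonormal eigenvectors corresponding to the K largest (in absolute value) eigenvalues of D̄. Then any two rows u_i, u_j of W corresponding to vertices in different blocks satisfy ‖u_i − u_j‖₂ = √(2K/n). -/
open Matrix

/-- row separation of the block eigenspace: if `W` is an `n × K` matrix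
whose columns form an orthonormal family of eigenvectors of the block-constant matrix
`D̄` corresponding to the `K` largest-in-absolute-value eigenvalues (equivalently, to
eigenvalues different from `-σ₁`), then any two rows of `W` belonging to different
blocks are at Euclidean distance exactly `√(2K/n)`. -/
theorem stmt_11 (K m : ℕ) (hK : 1 ≤ K) (hm : 1 ≤ m) (n : ℕ) (hn : n = K * m)
    (σ₁ σ₂ : ℝ) (h12 : σ₂ < σ₁) (h2 : 0 < σ₂)
    (D : Matrix (Fin n) (Fin n) ℝ)
    (hD : ∀ i j : Fin n, D i j =
      if i = j then 0 else if i.val / m = j.val / m then σ₁ else σ₂)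
    (W : Matrix (Fin n) (Fin K) ℝ) (hWorth : Wᵀ * W = 1)
    (μ : Fin K → ℝ)
    (hWeig : ∀ k, D *ᵥ (fun i => W i k) = μ k • (fun i => W i k))
    (htop : ∀ k, μ k ≠ -σ₁) :
    ∀ i j : Fin n, i.val / m ≠ j.val / m →
      Real.sqrt (∑ k, (W i k - W j k) ^ 2) = Real.sqrt (2 * K / n) := by
  subst hn
  have hm0 : 0 < m := hm
  -- key sum identity: for each column k and row i,
  -- (μ k + σ₁) * W i k = ∑ j, (if i/m = j/m then σ₁ else σ₂) * W j k
  have hkey : ∀ (k : Fin K) (i : Fin (K * m)),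
      (μ k + σ₁) * W i k
        = ∑ j, (if i.val / m = j.val / m then σ₁ else σ₂) * W j k := by
    intro k i
    have h := congrFun (hWeig k) i
    simp only [mulVec, dotProduct, Pi.smul_apply, smul_eq_mul] at h
    have hrw : ∀ j : Fin (K * m), D i j * W j k
        = (if i.val / m = j.val / m then σ₁ else σ₂) * W j k
          - (if i = j then (if i.val / m = j.val / m then σ₁ else σ₂) * W j k else 0) := by
      intro j
      rw [hD]
      by_cases hij : i = j <;> simp [hij]
    rw [Finset.sum_congr rfl (fun j _ => hrw j), Finset.sum_sub_distrib,
      Finset.sum_ite_eq] at h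
    simp only [Finset.mem_univ, if_true] at h
    linarith [h]
  -- block-constantness of columns of W
  have hblock : ∀ (k : Fin K) (i j : Fin (K * m)), i.val / m = j.val / m →
      W i k = W j k := by
    intro k i j hij
    have h1 := hkey k i
    have h2 := hkey k j
    have hsum : (∑ x, (if i.val / m = x.val / m then σ₁ else σ₂) * W x k)
        = ∑ x, (if j.val / m = x.val / m then σ₁ else σ₂) * W x k := by
      apply Finset.sum_congr rfl
      intro x _
      rw [hij]
    have hne : μ k + σ₁ ≠ 0 := by
      intro hc
      exact htop k (by linarith)
    have := h1.trans (hsum.trans h2.symm)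
    exact mul_left_cancel₀ hne this
  -- the block index
  have hdiv : ∀ i : Fin (K * m), i.val / m < K := by
    intro i
    exact (Nat.div_lt_iff_lt_mul hm0).2 i.2
  set e := (finProdFinEquiv : Fin K × Fin m ≃ Fin (K * m)) with he
  have heval : ∀ (b : Fin K) (r : Fin m), ((e (b, r)) : ℕ) = r + m * b := by
    intro b r; simp [he, finProdFinEquiv]
  have hediv : ∀ (b : Fin K) (r : Fin m), ((e (b, r)) : ℕ) / m = b := by
    intro b r
    rw [heval, Nat.add_mul_div_left _ _ hm0, Nat.div_eq_of_lt r.2, Nat.zero_add]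
  -- block-constant values
  set V : Matrix (Fin K) (Fin K) ℝ :=
    fun b k => W (e (b, ⟨0, hm0⟩)) k with hV
  have hWV : ∀ (i : Fin (K * m)) (k : Fin K), W i k = V ⟨i.val / m, hdiv i⟩ k := by
    intro i k
    apply hblock
    rw [hediv]
  -- rewrite orthonormality via V
  have horthV : Vᵀ * ((m : ℝ) • V) = 1 := by
    ext k l
    have hW := congrFun (congrFun hWorth k) l
    simp only [Matrix.mul_apply, Matrix.one_apply, transpose_apply, Pi.smul_apply,
      smul_eq_mul] at hW ⊢
    rw [← hW]
    rw [← Equiv.sum_comp e (fun i => W i k * W i l), Fintype.sum_prod_type]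
    have : ∀ b : Fin K, ∑ r : Fin m, W (e (b, r)) k * W (e (b, r)) l
        = (m : ℝ) * (V b k * V b l) := by
      intro b
      have : ∀ r : Fin m, W (e (b, r)) k * W (e (b, r)) l = V b k * V b l := by
        intro r
        have h1 : W (e (b, r)) k = V b k := by
          rw [hWV (e (b, r)) k]
          congr 1
          exact Fin.ext (hediv b r)
        have h2 : W (e (b, r)) l = V b l := by
          rw [hWV (e (b, r)) l]
          congr 1
          exact Fin.ext (hediv b r)
        rw [h1, h2]
      rw [Finset.sum_congr rfl (fun r _ => this r), Finset.sum_const, Finset.card_univ,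
        Fintype.card_fin, nsmul_eq_mul]
    rw [Finset.sum_congr rfl (fun b _ => this b)]
    apply Finset.sum_congr rfl
    intro x _
    rw [Matrix.smul_apply, smul_eq_mul]
    ring
  -- rows of √m V are orthonormal
  have hrows : ((m : ℝ) • V) * Vᵀ = 1 := mul_eq_one_comm.mp horthV
  have hrow : ∀ b c : Fin K, (m : ℝ) * (∑ k, V b k * V c k)
      = if b = c then 1 else 0 := by
    intro b c
    have h := congrFun (congrFun hrows b) c
    simp only [Matrix.mul_apply, Matrix.one_apply, transpose_apply, Matrix.smul_apply,
      smul_eq_mul] at h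
    rw [Finset.mul_sum]
    rw [← h]
    apply Finset.sum_congr rfl
    intro k _
    ring
  -- finish
  intro i j hij
  set b : Fin K := ⟨i.val / m, hdiv i⟩ with hb
  set c : Fin K := ⟨j.val / m, hdiv j⟩ with hc
  have hbc : b ≠ c := by
    intro hcon
    exact hij (congrArg Fin.val hcon)
  have hmne : (m : ℝ) ≠ 0 := Nat.cast_ne_zero.mpr hm0.ne'
  have hKne : (K : ℝ) ≠ 0 := Nat.cast_ne_zero.mpr (Nat.pos_of_ne_zero (by omega)).ne'
  have e1 := hrow b b; rw [if_pos rfl] at e1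
  have e2 := hrow b c; rw [if_neg hbc] at e2
  have e3 := hrow c c; rw [if_pos rfl] at e3
  have hbc0 : ∑ k, V b k * V c k = 0 := by
    rcases mul_eq_zero.mp e2 with h | h
    · exact absurd h hmne
    · exact h
  congr 1
  have expand : ∑ k, (W i k - W j k) ^ 2
      = ((∑ k, V b k * V b k) + (∑ k, V c k * V c k))
        - 2 * (∑ k, V b k * V c k) := by
    rw [← Finset.sum_add_distrib, Finset.mul_sum, ← Finset.sum_sub_distrib]
    apply Finset.sum_congr rfl
    intro k _
    rw [hWV i k, hWV j k]
    ring
  rw [expand, hbc0, mul_zero, sub_zero]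
  have hcast : ((K * m : ℕ) : ℝ) = (K : ℝ) * m := by push_cast; ring
  rw [hcast]
  field_simp
  simp only [sq]
  nlinarith [e1, e3]
end
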